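/- Let N ≥ 5 and let S satisfy 8 < S < 16, with s = S − 8. The number of XOR-triples {a, b, c} contained in {1, …, 2^{N−1} − 1} \ {S} having at least one element congruent to 0 or to s modulo 8 equals 4 · (2^{N−4}(2^{N−4} − 1) + (2^{N−3} − 1)(2^{N−3} − 2)/6), the division being exact. -/

import Mathlib

/-- An XOR-triple is a 3-element set of positive natural numbers `{a, b, c}`
with `a ^^^ b = c`; this condition is symmetric in `a`, `b`, `c`. -/
def IsXorTriple (t : Finset ℕ) : Prop :=
  t.card = 3 ∧ (∀ x ∈ t, 0 < x) ∧ ∃ a ∈ t, ∃ b ∈ t, a ≠ b ∧ a ^^^ b ∈ t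

instance : DecidablePred IsXorTriple := fun t => by
  unfold IsXorTriple; infer_instance


lemma xor_mod8 (a b : ℕ) : (a ^^^ b) % 8 = (a % 8) ^^^ (b % 8) := by
  have h : (8:ℕ) = 2^3 := by norm_num
  rw [h, ← Nat.and_two_pow_sub_one_eq_mod, ← Nat.and_two_pow_sub_one_eq_mod,
    ← Nat.and_two_pow_sub_one_eq_mod]
  exact Nat.eq_of_testBit_eq fun i => by
    simp [Nat.testBit_and, Bool.and_xor_distrib_right]

lemma xor_div8 (a b : ℕ) : (a ^^^ b) / 8 = (a / 8) ^^^ (b / 8) := by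
  have h : ∀ x : ℕ, x / 8 = x / 2 / 2 / 2 := fun x => by
    rw [Nat.div_div_eq_div_mul, Nat.div_div_eq_div_mul]
  rw [h, h, h, Nat.xor_div_two, Nat.xor_div_two, Nat.xor_div_two]

lemma eq_of_div8_mod8 {a b : ℕ} (h1 : a / 8 = b / 8) (h2 : a % 8 = b % 8) : a = b := by
  omega

lemma mul8_xor (u v : ℕ) : (8 * u) ^^^ (8 * v) = 8 * (u ^^^ v) := by
  apply eq_of_div8_mod8
  · rw [xor_div8]; simp [Nat.mul_div_cancel_left]
  · rw [xor_mod8]; simp [Nat.mul_mod_right]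

lemma xor_lt_pow {a b n : ℕ} (ha : a < 2^n) (hb : b < 2^n) : a ^^^ b < 2^n :=
  Nat.xor_lt_two_pow ha hb

lemma xor_pos {a b : ℕ} (h : a ≠ b) : 0 < a ^^^ b :=
  Nat.pos_of_ne_zero (fun e => h (xor_eq_zero_iff.1 e))


lemma triple_shape {t : Finset ℕ} (ht : IsXorTriple t) :
    ∃ a b, 0 < a ∧ 0 < b ∧ a ≠ b ∧ a ^^^ b ≠ a ∧ a ^^^ b ≠ b ∧ t = {a, b, a ^^^ b} := by
  obtain ⟨hcard, hpos, a, ha, b, hb, hab, hxor⟩ := ht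
  have hpa := hpos a ha
  have hpb := hpos b hb
  have h1 : a ^^^ b ≠ a := fun h => by
    have : b = 0 := by
      have := congrArg (· ^^^ a) h
      simpa [Nat.xor_comm, xor_cancel_left, Nat.xor_self] using this
    omega
  have h2 : a ^^^ b ≠ b := fun h => by
    have : a = 0 := by
      have := congrArg (· ^^^ b) h
      simpa [xor_cancel_right, Nat.xor_self] using this
    omega
  refine ⟨a, b, hpa, hpb, hab, h1, h2, ?_⟩
  have hsub : ({a, b, a ^^^ b} : Finset ℕ) ⊆ t := by
    intro x hx
    simp only [Finset.mem_insert, Finset.mem_singleton] at hx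
    rcases hx with rfl | rfl | rfl <;> assumption
  have hc : ({a, b, a ^^^ b} : Finset ℕ).card = 3 := by
    rw [Finset.card_insert_of_notMem (by simp [hab, Ne.symm h1]),
      Finset.card_insert_of_notMem (by simp [Ne.symm h2])]
    simp
  exact (Finset.eq_of_subset_of_card_le hsub (by omega)).symm

/-- build a triple -/
lemma isXorTriple_mk {a b : ℕ} (hpa : 0 < a) (hpb : 0 < b) (hab : a ≠ b) :
    IsXorTriple {a, b, a ^^^ b} := by
  have h1 : a ^^^ b ≠ a := fun h => by
    have : b = 0 := by
      have := congrArg (· ^^^ a) h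
      simpa [Nat.xor_comm, xor_cancel_left, Nat.xor_self] using this
    omega
  have h2 : a ^^^ b ≠ b := fun h => by
    have : a = 0 := by
      have := congrArg (· ^^^ b) h
      simpa [xor_cancel_right, Nat.xor_self] using this
    omega
  refine ⟨?_, ?_, a, by simp, b, by simp, hab, by simp⟩
  · rw [Finset.card_insert_of_notMem (by simp [hab, Ne.symm h1]),
      Finset.card_insert_of_notMem (by simp [Ne.symm h2])]
    simp
  · intro x hx
    simp only [Finset.mem_insert, Finset.mem_singleton] at hx
    rcases hx with rfl | rfl | rfl
    · exact hpa
    · exact hpb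
    · exact Nat.pos_of_ne_zero (fun e => hab (xor_eq_zero_iff.1 e))


lemma hi_iff {k x : ℕ} (hx : x < 2^(k+1)) : 2^k ≤ x ↔ x.testBit k = true := by
  have hp : 0 < 2^k := Nat.pow_pos (by norm_num)
  have hd : x / 2^k < 2 := Nat.div_lt_of_lt_mul (by rw [pow_succ] at hx; omega)
  have h1 : 2^k ≤ x ↔ 1 ≤ x / 2^k := by
    rw [Nat.le_div_iff_mul_le hp]; omega
  rw [Nat.testBit_eq_decide_div_mod_eq]
  simp only [decide_eq_true_eq]
  rw [h1]
  generalize x / 2^k = y at hd ⊢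
  omega

lemma lo_iff {k x : ℕ} (hx : x < 2^(k+1)) : x < 2^k ↔ x.testBit k = false := by
  rw [← Nat.not_le, hi_iff hx]
  simp

lemma xor_high_count {k a b : ℕ} (ha : a < 2^(k+1)) (hb : b < 2^(k+1)) :
    a ^^^ b < 2^k ↔ (2^k ≤ a ↔ 2^k ≤ b) := by
  have hxy : a ^^^ b < 2^(k+1) := Nat.xor_lt_two_pow ha hb
  rw [lo_iff hxy, hi_iff ha, hi_iff hb, Nat.testBit_xor]
  cases a.testBit k <;> cases b.testBit k <;> simp

lemma filter_triple_pair {x y z : ℕ} {p : ℕ → Prop} [DecidablePred p]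
    (hx : p x) (hy : p y) (hz : ¬ p z) : ({x, y, z} : Finset ℕ).filter p = {x, y} := by
  ext w
  simp only [Finset.mem_filter, Finset.mem_insert, Finset.mem_singleton]
  constructor
  · rintro ⟨rfl | rfl | rfl, hw⟩ <;> tauto
  · rintro (rfl | rfl) <;> tauto
section Core

lemma two_dvd_mul_pred (n : ℕ) : 2 ∣ n * (n - 1) := by
  cases n with
  | zero => simp
  | succ m =>
    have := Nat.even_mul_succ_self m
    simpa [Nat.mul_comm, Nat.succ_sub_one] using this.two_dvd

lemma triple_shape_high {k : ℕ} {t : Finset ℕ} (ht : IsXorTriple t)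
    (hbig : ∀ x ∈ t, x < 2^(k+1)) (hnl : ∃ x ∈ t, 2^k ≤ x) :
    ∃ x y, x ≠ y ∧ 2^k ≤ x ∧ 2^k ≤ y ∧ x ^^^ y < 2^k ∧ t = {x, y, x ^^^ y} := by
  obtain ⟨a, b, hpa, hpb, hab, hca, hcb, rfl⟩ := triple_shape ht
  have ha2 : a < 2^(k+1) := hbig a (by simp)
  have hb2 : b < 2^(k+1) := hbig b (by simp)
  have hc2 : a ^^^ b < 2^(k+1) := Nat.xor_lt_two_pow ha2 hb2
  by_cases hA : 2^k ≤ a <;> by_cases hB : 2^k ≤ b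
  · exact ⟨a, b, hab, hA, hB, (xor_high_count ha2 hb2).2 (by tauto), rfl⟩
  · have hC : 2^k ≤ a ^^^ b := by
      by_contra hC
      rw [Nat.not_le, xor_high_count ha2 hb2] at hC; tauto
    refine ⟨a, a ^^^ b, Ne.symm hca, hA, hC, ?_, ?_⟩
    · rw [xor_cancel_left]; omega
    · rw [xor_cancel_left]
      ext w; simp only [Finset.mem_insert, Finset.mem_singleton]; tauto
  · have hC : 2^k ≤ a ^^^ b := by
      by_contra hC
      rw [Nat.not_le, xor_high_count ha2 hb2] at hC; tauto
    refine ⟨b, a ^^^ b, Ne.symm hcb, hB, hC, ?_, ?_⟩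
    · rw [Nat.xor_comm a b, xor_cancel_left]; omega
    · rw [Nat.xor_comm a b, xor_cancel_left]
      ext w; simp only [Finset.mem_insert, Finset.mem_singleton]; tauto
  · exfalso
    have hC : a ^^^ b < 2^k := (xor_high_count ha2 hb2).2 (by tauto)
    obtain ⟨x, hx, hxk⟩ := hnl
    simp only [Finset.mem_insert, Finset.mem_singleton] at hx
    rcases hx with rfl | rfl | rfl <;> omega

lemma not_subset_low {k : ℕ} {t : Finset ℕ}
    (hsub : t ⊆ Finset.Icc 1 (2^(k+1)-1)) (hnl : ¬ t ⊆ Finset.Icc 1 (2^k - 1)) :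
    ∃ x ∈ t, 2^k ≤ x := by
  rw [Finset.not_subset] at hnl
  obtain ⟨x, hx, hxl⟩ := hnl
  have h1 := hsub hx
  simp only [Finset.mem_Icc, not_and, not_le] at h1 hxl
  exact ⟨x, hx, by omega⟩

lemma triple_eq_union (a b z : ℕ) : ({a, b, z} : Finset ℕ) = {a, b} ∪ {z} := by
  ext w; simp [Finset.mem_insert, or_assoc]

lemma part2_card (k : ℕ) :
    (((Finset.Icc 1 (2^(k+1)-1)).powerset.filter IsXorTriple).filter
        (fun t => ¬ t ⊆ Finset.Icc 1 (2^k - 1))).card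
      = ((Finset.Icc (2^k) (2^(k+1)-1)).powersetCard 2).card := by
  have hpk : 0 < 2^k := Nat.pow_pos (by norm_num)
  have hpkk : (2:ℕ)^(k+1) = 2 * 2^k := by ring
  apply Finset.card_bij (fun t _ => t.filter (fun x => 2^k ≤ x))
  · rintro t ht
    simp only [Finset.mem_filter, Finset.mem_powerset] at ht
    obtain ⟨⟨hsub, htrip⟩, hnl⟩ := ht
    have hbig' : ∀ x ∈ t, x < 2^(k+1) := by
      intro x hx
      have := hsub hx
      simp only [Finset.mem_Icc] at this
      omega
    obtain ⟨x, y, hxy, hX, hY, hC, rfl⟩ :=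
      triple_shape_high htrip hbig' (not_subset_low hsub hnl)
    rw [filter_triple_pair hX hY (by omega)]
    simp only [Finset.mem_powersetCard]
    constructor
    · intro w hw
      simp only [Finset.mem_insert, Finset.mem_singleton] at hw
      have hx' := hsub (show x ∈ _ from Finset.mem_insert_self _ _)
      have hy' := hsub (show y ∈ ({x, y, x ^^^ y} : Finset ℕ) from
        Finset.mem_insert_of_mem (Finset.mem_insert_self _ _))
      simp only [Finset.mem_Icc] at hx' hy' ⊢
      rcases hw with rfl | rfl <;> omega
    · rw [Finset.card_insert_of_notMem (by simp [hxy]), Finset.card_singleton]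
  · rintro t1 h1 t2 h2 heq
    simp only [Finset.mem_filter, Finset.mem_powerset] at h1 h2
    obtain ⟨⟨hsub1, htrip1⟩, hnl1⟩ := h1
    obtain ⟨⟨hsub2, htrip2⟩, hnl2⟩ := h2
    have hbig1 : ∀ x ∈ t1, x < 2^(k+1) := fun x hx => by
      have := hsub1 hx; simp only [Finset.mem_Icc] at this; omega
    have hbig2 : ∀ x ∈ t2, x < 2^(k+1) := fun x hx => by
      have := hsub2 hx; simp only [Finset.mem_Icc] at this; omega
    obtain ⟨x1, y1, hxy1, hX1, hY1, hC1, rfl⟩ :=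
      triple_shape_high htrip1 hbig1 (not_subset_low hsub1 hnl1)
    obtain ⟨x2, y2, hxy2, hX2, hY2, hC2, rfl⟩ :=
      triple_shape_high htrip2 hbig2 (not_subset_low hsub2 hnl2)
    rw [filter_triple_pair hX1 hY1 (by omega), filter_triple_pair hX2 hY2 (by omega)] at heq
    have hmemx : x1 = x2 ∨ x1 = y2 := by
      have : x1 ∈ ({x2, y2} : Finset ℕ) := heq ▸ Finset.mem_insert_self _ _
      simpa using this
    have hmemy : y1 = x2 ∨ y1 = y2 := by
      have : y1 ∈ ({x2, y2} : Finset ℕ) :=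
        heq ▸ Finset.mem_insert_of_mem (Finset.mem_singleton_self _)
      simpa using this
    have hxor : x1 ^^^ y1 = x2 ^^^ y2 := by
      rcases hmemx with h | h <;> rcases hmemy with h' | h'
      · exfalso; exact hxy1 (h.trans h'.symm)
      · rw [h, h']
      · rw [h, h', Nat.xor_comm]
      · exfalso; exact hxy1 (h.trans h'.symm)
    rw [triple_eq_union, triple_eq_union, heq, hxor]
  · rintro p hp
    simp only [Finset.mem_powersetCard] at hp
    obtain ⟨hpsub, hpcard⟩ := hp
    obtain ⟨x, y, hxy, rfl⟩ := Finset.card_eq_two.1 hpcard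
    have hx := hpsub (Finset.mem_insert_self _ _)
    have hy := hpsub (Finset.mem_insert_of_mem (Finset.mem_singleton_self _))
    simp only [Finset.mem_Icc] at hx hy
    have hC : x ^^^ y < 2^k := by
      rw [xor_high_count (by omega) (by omega)]
      constructor <;> intro <;> [exact hy.1; exact hx.1]
    have hCpos : 0 < x ^^^ y := xor_pos hxy
    refine ⟨{x, y, x ^^^ y}, ?_, ?_⟩
    · simp only [Finset.mem_filter, Finset.mem_powerset]
      refine ⟨⟨?_, isXorTriple_mk (by omega) (by omega) hxy⟩, ?_⟩
      · intro w hw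
        simp only [Finset.mem_insert, Finset.mem_singleton] at hw
        simp only [Finset.mem_Icc]
        rcases hw with rfl | rfl | rfl <;> omega
      · rw [Finset.not_subset]
        refine ⟨x, Finset.mem_insert_self _ _, ?_⟩
        simp only [Finset.mem_Icc, not_and, not_le]
        omega
    · exact filter_triple_pair hx.1 hy.1 (by omega)

lemma xt_count (k : ℕ) :
    6 * ((Finset.Icc 1 (2^k - 1)).powerset.filter IsXorTriple).card
      = (2^k - 1) * (2^k - 2) := by
  induction k with
  | zero => decide
  | succ k ih =>
    have hpk : 0 < 2^k := Nat.pow_pos (by norm_num)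
    have hpkk : (2:ℕ)^(k+1) = 2 * 2^k := by ring
    have hsplit :
        (((Finset.Icc 1 (2^(k+1)-1)).powerset.filter IsXorTriple)).card
        = ((((Finset.Icc 1 (2^(k+1)-1)).powerset.filter IsXorTriple)).filter
            (fun t => t ⊆ Finset.Icc 1 (2^k - 1))).card
          + ((((Finset.Icc 1 (2^(k+1)-1)).powerset.filter IsXorTriple)).filter
            (fun t => ¬ t ⊆ Finset.Icc 1 (2^k - 1))).card :=
      (Finset.card_filter_add_card_filter_not _).symm
    have hpart1 : (((Finset.Icc 1 (2^(k+1)-1)).powerset.filter IsXorTriple)).filter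
          (fun t => t ⊆ Finset.Icc 1 (2^k - 1))
        = (Finset.Icc 1 (2^k - 1)).powerset.filter IsXorTriple := by
      ext t
      simp only [Finset.mem_filter, Finset.mem_powerset]
      constructor
      · rintro ⟨⟨-, h2⟩, h3⟩; exact ⟨h3, h2⟩
      · rintro ⟨h1, h2⟩
        refine ⟨⟨h1.trans ?_, h2⟩, h1⟩
        apply Finset.Icc_subset_Icc le_rfl
        omega
    have hHcard : (Finset.Icc (2^k) (2^(k+1)-1)).card = 2^k := by
      rw [Nat.card_Icc, hpkk]
      omega
    have hchoose : ((Finset.Icc (2^k) (2^(k+1)-1)).powersetCard 2).card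
        = 2^k * (2^k - 1) / 2 := by
      rw [Finset.card_powersetCard, hHcard, Nat.choose_two_right]
    have h2dvd : 2 ∣ 2^k * (2^k - 1) := two_dvd_mul_pred (2^k)
    have h6 : 6 * (2^k * (2^k - 1) / 2) = 3 * (2^k * (2^k - 1)) := by
      calc 6 * (2^k * (2^k - 1) / 2) = 3 * (2 * (2^k * (2^k - 1) / 2)) := by ring
        _ = 3 * (2^k * (2^k - 1)) := by rw [Nat.mul_div_cancel' h2dvd]
    rw [hsplit, hpart1, part2_card, hchoose, Nat.mul_add, ih, h6, hpkk]
    rcases Nat.exists_eq_add_of_le hpk with ⟨m, hm⟩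
    rw [show (2:ℕ)^k = m + 1 by omega]
    cases m with
    | zero => norm_num
    | succ r =>
      have e1 : r + 1 + 1 - 1 = r + 1 := by omega
      have e2 : r + 1 + 1 - 2 = r := by omega
      have e3 : 2 * (r + 1 + 1) - 1 = 2*r + 3 := by omega
      have e4 : 2 * (r + 1 + 1) - 2 = 2*r + 2 := by omega
      rw [e1, e2, e3, e4]
      ring

end Core
section Helpers2

lemma xor_ne_left {a b : ℕ} (hb : b ≠ 0) : a ^^^ b ≠ a := by
  intro h
  have := congrArg (fun z => a ^^^ z) h.symm
  simp only [xor_cancel_left, Nat.xor_self] at this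
  exact hb this.symm

lemma xor_ne_right {a b : ℕ} (ha : a ≠ 0) : a ^^^ b ≠ b := by
  intro h
  rw [Nat.xor_comm] at h
  exact xor_ne_left ha h

lemma choose2 (m : ℕ) : 2 * m.choose 2 = m * (m - 1) := by
  rw [Nat.choose_two_right, Nat.mul_div_cancel' (two_dvd_mul_pred m)]

lemma filter_triple_single {x y z : ℕ} {p : ℕ → Prop} [DecidablePred p]
    (hx : p x) (hy : ¬ p y) (hz : ¬ p z) : ({x, y, z} : Finset ℕ).filter p = {x} := by
  ext w
  simp only [Finset.mem_filter, Finset.mem_insert, Finset.mem_singleton]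
  constructor
  · rintro ⟨rfl | rfl | rfl, hw⟩ <;> tauto
  · rintro rfl; tauto

lemma coset_card (q r : ℕ) (hr1 : 1 ≤ r) (hr2 : r < 8) :
    ((Finset.Icc 1 (8*q - 1)).filter (fun x => x % 8 = r)).card = q := by
  have key : ((Finset.Icc 1 (8*q - 1)).filter (fun x => x % 8 = r)).card
      = (Finset.range q).card := by
    apply Finset.card_bij (fun x _ => x / 8)
    · intro x hx
      simp only [Finset.mem_filter, Finset.mem_Icc] at hx
      simp only [Finset.mem_range]
      omega
    · intro x1 h1 x2 h2 heq
      simp only [Finset.mem_filter, Finset.mem_Icc] at h1 h2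
      omega
    · intro u hu
      simp only [Finset.mem_range] at hu
      refine ⟨8*u + r, ?_, by omega⟩
      simp only [Finset.mem_filter, Finset.mem_Icc]
      omega
  rw [key, Finset.card_range]

/-- pivot form of a triple at a chosen element -/
lemma triple_pivot {t : Finset ℕ} (ht : IsXorTriple t) {w : ℕ} (hw : w ∈ t) :
    ∃ d, w ≠ d ∧ 0 < d ∧ 0 < w ∧ t = {w, d, w ^^^ d} := by
  obtain ⟨a, b, hpa, hpb, hab, hca, hcb, rfl⟩ := triple_shape ht
  have hcpos : 0 < a ^^^ b := xor_pos hab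
  simp only [Finset.mem_insert, Finset.mem_singleton] at hw
  rcases hw with rfl | rfl | rfl
  · exact ⟨b, hab, hpb, hpa, rfl⟩
  · refine ⟨a, Ne.symm hab, hpa, hpb, ?_⟩
    rw [Nat.xor_comm w a]
    ext z; simp only [Finset.mem_insert, Finset.mem_singleton]; tauto
  · refine ⟨a, hca, hpa, hcpos, ?_⟩
    have h1 : (a ^^^ b) ^^^ a = b := by rw [Nat.xor_comm a b]; exact xor_cancel_right b a
    rw [h1]
    ext z; simp only [Finset.mem_insert, Finset.mem_singleton]; tauto

end Helpers2
section Shapes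

lemma triple_shape_res {t : Finset ℕ} (ht : IsXorTriple t)
    (hE : ∃ x ∈ t, x % 8 = 0) (hnA : ¬ ∀ x ∈ t, x % 8 = 0) :
    ∃ x y, x ≠ y ∧ x % 8 ≠ 0 ∧ x % 8 = y % 8 ∧ (x ^^^ y) % 8 = 0 ∧ t = {x, y, x ^^^ y} := by
  obtain ⟨u, hu, hu8⟩ := hE
  obtain ⟨d, hud, hdpos, hupos, rfl⟩ := triple_pivot ht hu
  have hudres : (u ^^^ d) % 8 = d % 8 := by
    rw [xor_mod8, hu8, Nat.zero_xor]
  have hrho : d % 8 ≠ 0 := by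
    push_neg at hnA
    obtain ⟨x, hx, hx8⟩ := hnA
    simp only [Finset.mem_insert, Finset.mem_singleton] at hx
    rcases hx with rfl | rfl | rfl
    · exact absurd hu8 hx8
    · exact hx8
    · rw [hudres] at hx8; exact hx8
  have hkey : d ^^^ (u ^^^ d) = u := by
    rw [Nat.xor_comm u d, xor_cancel_left]
  refine ⟨d, u ^^^ d, ?_, hrho, hudres.symm, by rw [hkey]; exact hu8, ?_⟩
  · exact (xor_ne_right (by omega : u ≠ 0)).symm
  · rw [hkey]
    ext z; simp only [Finset.mem_insert, Finset.mem_singleton]; tauto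

lemma triple_shape_zero {s : ℕ} (hs0 : s ≠ 0) {t : Finset ℕ} (ht : IsXorTriple t)
    (hcond : ∃ x ∈ t, x % 8 = 0 ∨ x % 8 = s) (hnE : ∀ x ∈ t, x % 8 ≠ 0) :
    ∃ w x, w ≠ x ∧ w % 8 = s ∧ x % 8 ≠ 0 ∧ x % 8 ≠ s ∧ x % 8 < (x % 8) ^^^ s ∧
      t = {w, x, w ^^^ x} := by
  obtain ⟨w, hw, hws⟩ := hcond
  have hws : w % 8 = s := by
    rcases hws with h | h
    · exact absurd h (hnE w hw)
    · exact h
  obtain ⟨d, hwd, hdpos, hwpos, rfl⟩ := triple_pivot ht hw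
  have hd1 : d ∈ ({w, d, w ^^^ d} : Finset ℕ) := by simp
  have hd2 : w ^^^ d ∈ ({w, d, w ^^^ d} : Finset ℕ) := by simp
  have hwdres : (w ^^^ d) % 8 = s ^^^ (d % 8) := by rw [xor_mod8, hws]
  have hrho0 : d % 8 ≠ 0 := hnE d hd1
  have hrhos : d % 8 ≠ s := by
    intro h
    apply hnE _ hd2
    rw [hwdres, h, Nat.xor_self]
  have hrho's : s ^^^ (d % 8) ≠ s := xor_ne_left hrho0
  have hrho'0 : s ^^^ (d % 8) ≠ 0 := fun h => hrhos (xor_eq_zero_iff.1 h).symm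
  by_cases hlt : d % 8 < (d % 8) ^^^ s
  · exact ⟨w, d, hwd, hws, hrho0, hrhos, hlt, rfl⟩
  · refine ⟨w, w ^^^ d, (xor_ne_left (by omega : d ≠ 0)).symm, hws, ?_, ?_, ?_, ?_⟩
    · rw [hwdres]; exact hrho'0
    · rw [hwdres]; exact hrho's
    · rw [hwdres]
      have h1 : (s ^^^ d % 8) ^^^ s = d % 8 := by
        rw [Nat.xor_comm s (d % 8)]; exact xor_cancel_right (d % 8) s
      rw [h1]
      have hne : s ^^^ d % 8 ≠ d % 8 := xor_ne_right hs0
      have : (d % 8) ^^^ s = s ^^^ (d % 8) := Nat.xor_comm _ _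
      omega
    · have hkey : w ^^^ (w ^^^ d) = d := xor_cancel_left w d
      rw [hkey]
      ext z; simp only [Finset.mem_insert, Finset.mem_singleton]; tauto

end Shapes
section Master3

lemma Dcoset_card (k s r : ℕ) (hk : 1 ≤ k) (hs1 : 1 ≤ s) (hs7 : s ≤ 7)
    (hr1 : 1 ≤ r) (hr7 : r ≤ 7) :
    (((Finset.Icc 1 (2^(k+3) - 1)).erase (8+s)).filter (fun x => x % 8 = r)).card
      = if r = s then 2^k - 1 else 2^k := by
  have hq2 : 2 ≤ 2^k := by
    calc 2 = 2^1 := (pow_one 2).symm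
    _ ≤ 2^k := Nat.pow_le_pow_right (by norm_num) hk
  have h8q : (2:ℕ)^(k+3) = 8 * 2^k := by rw [pow_add]; ring
  rw [Finset.filter_erase, h8q]
  split_ifs with hrs
  · have hmem : 8 + s ∈ (Finset.Icc 1 (8 * 2^k - 1)).filter (fun x => x % 8 = r) := by
      simp only [Finset.mem_filter, Finset.mem_Icc]
      omega
    rw [Finset.card_erase_of_mem hmem, coset_card (2^k) r hr1 (by omega)]
  · have hmem : 8 + s ∉ (Finset.Icc 1 (8 * 2^k - 1)).filter (fun x => x % 8 = r) := by
      simp only [Finset.mem_filter, Finset.mem_Icc, not_and]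
      intro _
      omega
    rw [Finset.erase_eq_of_notMem hmem, coset_card (2^k) r hr1 (by omega)]

lemma master3 (k s : ℕ) (hk : 1 ≤ k) (hs1 : 1 ≤ s) (hs7 : s ≤ 7) :
    ((((Finset.Icc 1 (2^(k+3) - 1)).erase (8+s)).powerset.filter
        (fun t => IsXorTriple t ∧ ∃ x ∈ t, x % 8 = 0 ∨ x % 8 = s)).filter
        (fun t => ∀ x ∈ t, x % 8 = 0)).card
      = ((Finset.Icc 1 (2^k - 1)).powerset.filter IsXorTriple).card := by
  have hq2 : 2 ≤ 2^k := by
    calc 2 = 2^1 := (pow_one 2).symm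
    _ ≤ 2^k := Nat.pow_le_pow_right (by norm_num) hk
  have h8q : (2:ℕ)^(k+3) = 8 * 2^k := by rw [pow_add]; ring
  have hrecover : ∀ t : Finset ℕ, (∀ x ∈ t, x % 8 = 0) →
      (t.image (fun x => x / 8)).image (fun y => 8 * y) = t := by
    intro t hall
    rw [Finset.image_image]
    refine (Finset.image_congr ?_).trans Finset.image_id
    intro x hx
    have h := hall x (Finset.mem_coe.1 hx)
    simp only [Function.comp, id]
    omega
  apply Finset.card_bij (fun t _ => t.image (fun x => x / 8))
  · rintro t ht
    simp only [Finset.mem_filter, Finset.mem_powerset] at ht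
    obtain ⟨⟨hsub, htrip, hcond⟩, hall⟩ := ht
    have hbnd : ∀ x ∈ t, x ≠ 8 + s ∧ 1 ≤ x ∧ x ≤ 2^(k+3) - 1 := by
      intro x hx
      have := hsub hx
      simp only [Finset.mem_erase, Finset.mem_Icc] at this
      tauto
    simp only [Finset.mem_filter, Finset.mem_powerset]
    constructor
    · intro y hy
      simp only [Finset.mem_image] at hy
      obtain ⟨x, hx, rfl⟩ := hy
      obtain ⟨h1, h2, h3⟩ := hbnd x hx
      have h4 := hall x hx
      simp only [Finset.mem_Icc]
      omega
    · obtain ⟨hcard, hpos, a, ha, b, hb, hab, hxor⟩ := htrip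
      refine ⟨?_, ?_, a / 8, Finset.mem_image_of_mem _ ha,
        b / 8, Finset.mem_image_of_mem _ hb, ?_, ?_⟩
      · rw [Finset.card_image_of_injOn, hcard]
        intro x hx y hy hxy
        have h_x := hall x hx
        have h_y := hall y hy
        beta_reduce at hxy
        omega
      · intro y hy
        simp only [Finset.mem_image] at hy
        obtain ⟨x, hx, rfl⟩ := hy
        have h4 := hall x hx
        have h2 := hpos x hx
        omega
      · have h_a := hall a ha
        have h_b := hall b hb
        omega
      · rw [← xor_div8]
        exact Finset.mem_image_of_mem _ hxor
  · rintro t1 h1 t2 h2 heq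
    simp only [Finset.mem_filter, Finset.mem_powerset] at h1 h2
    rw [← hrecover t1 h1.2, ← hrecover t2 h2.2, heq]
  · rintro t' ht'
    simp only [Finset.mem_filter, Finset.mem_powerset] at ht'
    obtain ⟨hsub', htrip'⟩ := ht'
    obtain ⟨hcard', hpos', a, ha, b, hb, hab, hxor'⟩ := htrip'
    have hbnd' : ∀ y ∈ t', 1 ≤ y ∧ y ≤ 2^k - 1 := by
      intro y hy
      have := hsub' hy
      simp only [Finset.mem_Icc] at this
      tauto
    have hne : t'.Nonempty := ⟨a, ha⟩
    refine ⟨t'.image (fun y => 8 * y), ?_, ?_⟩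
    · simp only [Finset.mem_filter, Finset.mem_powerset]
      refine ⟨⟨?_, ?_, ?_⟩, ?_⟩
      · intro x hx
        simp only [Finset.mem_image] at hx
        obtain ⟨y, hy, rfl⟩ := hx
        obtain ⟨hy1, hy2⟩ := hbnd' y hy
        simp only [Finset.mem_erase, Finset.mem_Icc]
        omega
      · refine ⟨?_, ?_, 8 * a, Finset.mem_image_of_mem _ ha,
          8 * b, Finset.mem_image_of_mem _ hb, by omega, ?_⟩
        · rw [Finset.card_image_of_injOn, hcard']
          intro x hx y hy hxy
          beta_reduce at hxy
          omega
        · intro x hx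
          simp only [Finset.mem_image] at hx
          obtain ⟨y, hy, rfl⟩ := hx
          have := hpos' y hy
          omega
        · rw [mul8_xor]
          exact Finset.mem_image_of_mem _ hxor'
      · refine ⟨8 * a, Finset.mem_image_of_mem _ ha, Or.inl (by omega)⟩
      · intro x hx
        simp only [Finset.mem_image] at hx
        obtain ⟨y, hy, rfl⟩ := hx
        omega
    · rw [Finset.image_image]
      refine (Finset.image_congr ?_).trans Finset.image_id
      intro y hy
      simp only [Function.comp, id]
      omega

end Master3
section Master1

lemma sup_triple_res {x y : ℕ} (hxx : x % 8 = y % 8) (hz : (x ^^^ y) % 8 = 0) :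
    ({x, y, x ^^^ y} : Finset ℕ).sup (· % 8) = x % 8 := by
  rw [Finset.sup_insert, Finset.sup_insert, Finset.sup_singleton]
  simp only [hz, ← hxx]
  simp

lemma master1_fiber (k s r : ℕ) (hk : 1 ≤ k) (hs1 : 1 ≤ s) (hs7 : s ≤ 7)
    (hr1 : 1 ≤ r) (hr7 : r ≤ 7) :
    (((((Finset.Icc 1 (2^(k+3) - 1)).erase (8+s)).powerset.filter
        (fun t => IsXorTriple t ∧ ∃ x ∈ t, x % 8 = 0 ∨ x % 8 = s)).filter
        (fun t => (¬ ∀ x ∈ t, x % 8 = 0) ∧ ∃ x ∈ t, x % 8 = 0)).filter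
        (fun t => t.sup (· % 8) = r)).card
      = ((((Finset.Icc 1 (2^(k+3) - 1)).erase (8+s)).filter
          (fun x => x % 8 = r)).powersetCard 2).card := by
  have hq2 : 2 ≤ 2^k := by
    calc 2 = 2^1 := (pow_one 2).symm
    _ ≤ 2^k := Nat.pow_le_pow_right (by norm_num) hk
  have h8q : (2:ℕ)^(k+3) = 8 * 2^k := by rw [pow_add]; ring
  apply Finset.card_bij (fun t _ => t.filter (fun x => x % 8 ≠ 0))
  · rintro t ht
    simp only [Finset.mem_filter, Finset.mem_powerset] at ht
    obtain ⟨⟨⟨hsub, htrip, hcond⟩, hnA, hE⟩, hsup⟩ := ht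
    obtain ⟨x, y, hxy, hx0, hxx, hz0, rfl⟩ := triple_shape_res htrip hE hnA
    rw [sup_triple_res hxx hz0] at hsup
    rw [filter_triple_pair (p := fun w => w % 8 ≠ 0) hx0 (by omega : (fun w => w % 8 ≠ 0) y) (fun h => h hz0)]
    simp only [Finset.mem_powersetCard]
    refine ⟨?_, ?_⟩
    · intro w hw
      simp only [Finset.mem_insert, Finset.mem_singleton] at hw
      simp only [Finset.mem_filter]
      rcases hw with rfl | rfl
      · exact ⟨hsub (by simp), hsup⟩
      · exact ⟨hsub (by simp), by omega⟩
    · rw [Finset.card_insert_of_notMem (by simp [hxy]), Finset.card_singleton]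
  · rintro t1 h1 t2 h2 heq
    simp only [Finset.mem_filter, Finset.mem_powerset] at h1 h2
    obtain ⟨⟨⟨hsub1, htrip1, hcond1⟩, hnA1, hE1⟩, hsup1⟩ := h1
    obtain ⟨⟨⟨hsub2, htrip2, hcond2⟩, hnA2, hE2⟩, hsup2⟩ := h2
    obtain ⟨x1, y1, hxy1, hx01, hxx1, hz01, rfl⟩ := triple_shape_res htrip1 hE1 hnA1
    obtain ⟨x2, y2, hxy2, hx02, hxx2, hz02, rfl⟩ := triple_shape_res htrip2 hE2 hnA2
    rw [filter_triple_pair (p := fun w => w % 8 ≠ 0) hx01 (by omega : (fun w => w % 8 ≠ 0) y1) (fun h => h hz01),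
      filter_triple_pair (p := fun w => w % 8 ≠ 0) hx02 (by omega : (fun w => w % 8 ≠ 0) y2) (fun h => h hz02)] at heq
    have hmemx : x1 = x2 ∨ x1 = y2 := by
      have : x1 ∈ ({x2, y2} : Finset ℕ) := heq ▸ Finset.mem_insert_self _ _
      simpa using this
    have hmemy : y1 = x2 ∨ y1 = y2 := by
      have : y1 ∈ ({x2, y2} : Finset ℕ) :=
        heq ▸ Finset.mem_insert_of_mem (Finset.mem_singleton_self _)
      simpa using this
    have hxor : x1 ^^^ y1 = x2 ^^^ y2 := by
      rcases hmemx with h | h <;> rcases hmemy with h' | h'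
      · exfalso; exact hxy1 (h.trans h'.symm)
      · rw [h, h']
      · rw [h, h', Nat.xor_comm]
      · exfalso; exact hxy1 (h.trans h'.symm)
    rw [triple_eq_union, triple_eq_union, heq, hxor]
  · rintro p hp
    simp only [Finset.mem_powersetCard] at hp
    obtain ⟨hpsub, hpcard⟩ := hp
    obtain ⟨x, y, hxy, rfl⟩ := Finset.card_eq_two.1 hpcard
    have hx := hpsub (Finset.mem_insert_self _ _)
    have hy := hpsub (Finset.mem_insert_of_mem (Finset.mem_singleton_self _))
    simp only [Finset.mem_filter, Finset.mem_erase, Finset.mem_Icc] at hx hy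
    obtain ⟨⟨hxS, hx1, hx2⟩, hx8⟩ := hx
    obtain ⟨⟨hyS, hy1, hy2⟩, hy8⟩ := hy
    have hz8 : (x ^^^ y) % 8 = 0 := by
      rw [xor_mod8, hx8, hy8, Nat.xor_self]
    have hzlt : x ^^^ y < 2^(k+3) := Nat.xor_lt_two_pow (by omega) (by omega)
    have hzpos : 0 < x ^^^ y := xor_pos hxy
    have hzS : x ^^^ y ≠ 8 + s := by
      intro h
      rw [h] at hz8
      omega
    refine ⟨{x, y, x ^^^ y}, ?_, ?_⟩
    · simp only [Finset.mem_filter, Finset.mem_powerset]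
      refine ⟨⟨⟨?_, isXorTriple_mk (by omega) (by omega) hxy, ?_⟩, ?_, ?_⟩, ?_⟩
      · intro w hw
        simp only [Finset.mem_insert, Finset.mem_singleton] at hw
        simp only [Finset.mem_erase, Finset.mem_Icc]
        rcases hw with rfl | rfl | rfl
        · exact ⟨hxS, by omega⟩
        · exact ⟨hyS, by omega⟩
        · exact ⟨hzS, by omega⟩
      · exact ⟨x ^^^ y, by simp, Or.inl hz8⟩
      · push_neg
        exact ⟨x, by simp, by omega⟩
      · exact ⟨x ^^^ y, by simp, hz8⟩
      · rw [sup_triple_res (hx8.trans hy8.symm) hz8, hx8]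
    · exact filter_triple_pair (p := fun w => w % 8 ≠ 0)
        (by omega) (by omega) (fun h => h hz8)

lemma master1 (k s : ℕ) (hk : 1 ≤ k) (hs1 : 1 ≤ s) (hs7 : s ≤ 7) :
    ((((Finset.Icc 1 (2^(k+3) - 1)).erase (8+s)).powerset.filter
        (fun t => IsXorTriple t ∧ ∃ x ∈ t, x % 8 = 0 ∨ x % 8 = s)).filter
        (fun t => (¬ ∀ x ∈ t, x % 8 = 0) ∧ ∃ x ∈ t, x % 8 = 0)).card
      = (2^k - 1).choose 2 + 6 * (2^k).choose 2 := by
  rw [Finset.card_eq_sum_card_fiberwise (f := fun t => t.sup (· % 8))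
    (t := Finset.Icc 1 7) ?_]
  · have hstep : ∀ r ∈ Finset.Icc 1 7,
        ((((((Finset.Icc 1 (2^(k+3) - 1)).erase (8+s)).powerset.filter
          (fun t => IsXorTriple t ∧ ∃ x ∈ t, x % 8 = 0 ∨ x % 8 = s)).filter
          (fun t => (¬ ∀ x ∈ t, x % 8 = 0) ∧ ∃ x ∈ t, x % 8 = 0)).filter
          (fun t => t.sup (· % 8) = r)).card)
        = if r = s then (2^k - 1).choose 2 else (2^k).choose 2 := by
      intro r hr
      simp only [Finset.mem_Icc] at hr
      rw [master1_fiber k s r hk hs1 hs7 hr.1 hr.2, Finset.card_powersetCard,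
        Dcoset_card k s r hk hs1 hs7 hr.1 hr.2]
      exact apply_ite (Nat.choose · 2) _ _ _
    rw [Finset.sum_congr rfl hstep]
    have hsmem : s ∈ Finset.Icc 1 7 := by
      simp only [Finset.mem_Icc]; omega
    rw [← Finset.sum_erase_add _ _ hsmem, if_pos rfl]
    have hconst : ∀ r ∈ (Finset.Icc 1 7).erase s,
        (if r = s then (2^k - 1).choose 2 else (2^k).choose 2) = (2^k).choose 2 :=
      fun r hr => if_neg (Finset.ne_of_mem_erase hr)
    rw [Finset.sum_congr rfl hconst, Finset.sum_const, Finset.card_erase_of_mem hsmem,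
      Nat.card_Icc, smul_eq_mul]
    omega
  · intro t ht
    simp only [Finset.mem_coe, Finset.mem_filter, Finset.mem_powerset] at ht
    obtain ⟨⟨hsub, htrip, hcond⟩, hnA, hE⟩ := ht
    obtain ⟨x, y, hxy, hx0, hxx, hz0, rfl⟩ := triple_shape_res htrip hE hnA
    beta_reduce
    rw [sup_triple_res hxx hz0]
    simp only [Finset.mem_coe, Finset.mem_Icc]
    omega

end Master1
section Master0

lemma filter_triple_mid {x y z : ℕ} {p : ℕ → Prop} [DecidablePred p]
    (hx : ¬ p x) (hy : p y) (hz : ¬ p z) : ({x, y, z} : Finset ℕ).filter p = {y} := by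
  ext w
  simp only [Finset.mem_filter, Finset.mem_insert, Finset.mem_singleton]
  constructor
  · rintro ⟨rfl | rfl | rfl, hw⟩ <;> tauto
  · rintro rfl; tauto

lemma repset_card (s : ℕ) (hs1 : 1 ≤ s) (hs7 : s ≤ 7) :
    ((Finset.range 8).filter (fun r => r ≠ 0 ∧ r ≠ s ∧ r < r ^^^ s)).card = 3 := by
  interval_cases s <;> decide

lemma X_card (k s : ℕ) (hk : 1 ≤ k) (hs1 : 1 ≤ s) (hs7 : s ≤ 7) :
    (((Finset.Icc 1 (2^(k+3) - 1)).erase (8+s)).filter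
        (fun x => x % 8 ≠ 0 ∧ x % 8 ≠ s ∧ x % 8 < (x % 8) ^^^ s)).card = 3 * 2^k := by
  rw [Finset.card_eq_sum_card_fiberwise (f := fun x => x % 8)
    (t := (Finset.range 8).filter (fun r => r ≠ 0 ∧ r ≠ s ∧ r < r ^^^ s)) ?_]
  · have hstep : ∀ r ∈ (Finset.range 8).filter (fun r => r ≠ 0 ∧ r ≠ s ∧ r < r ^^^ s),
        (((((Finset.Icc 1 (2^(k+3) - 1)).erase (8+s)).filter
          (fun x => x % 8 ≠ 0 ∧ x % 8 ≠ s ∧ x % 8 < (x % 8) ^^^ s)).filter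
          (fun x => x % 8 = r)).card) = 2^k := by
      intro r hr
      simp only [Finset.mem_filter, Finset.mem_range] at hr
      obtain ⟨hr8, hr0, hrs, hrlt⟩ := hr
      have heq : (((Finset.Icc 1 (2^(k+3) - 1)).erase (8+s)).filter
            (fun x => x % 8 ≠ 0 ∧ x % 8 ≠ s ∧ x % 8 < (x % 8) ^^^ s)).filter
            (fun x => x % 8 = r)
          = ((Finset.Icc 1 (2^(k+3) - 1)).erase (8+s)).filter (fun x => x % 8 = r) := by
        rw [Finset.filter_filter]
        apply Finset.filter_congr
        intro x _
        constructor
        · rintro ⟨-, h⟩; exact h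
        · rintro h
          refine ⟨⟨h ▸ hr0, h ▸ hrs, ?_⟩, h⟩
          rw [h]
          exact hrlt
      rw [heq, Dcoset_card k s r hk hs1 hs7 (by omega) (by omega), if_neg hrs]
    rw [Finset.sum_congr rfl hstep, Finset.sum_const, repset_card s hs1 hs7, smul_eq_mul]
  · intro x hx
    simp only [Finset.mem_coe, Finset.mem_filter] at hx ⊢
    simp only [Finset.mem_range]
    exact ⟨Nat.mod_lt _ (by norm_num), hx.2⟩

lemma master0 (k s : ℕ) (hk : 1 ≤ k) (hs1 : 1 ≤ s) (hs7 : s ≤ 7) :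
    ((((Finset.Icc 1 (2^(k+3) - 1)).erase (8+s)).powerset.filter
        (fun t => IsXorTriple t ∧ ∃ x ∈ t, x % 8 = 0 ∨ x % 8 = s)).filter
        (fun t => (¬ ∀ x ∈ t, x % 8 = 0) ∧ ¬ ∃ x ∈ t, x % 8 = 0)).card
      = (2^k - 1) * (3 * 2^k) := by
  have hq2 : 2 ≤ 2^k := by
    calc 2 = 2^1 := (pow_one 2).symm
    _ ≤ 2^k := Nat.pow_le_pow_right (by norm_num) hk
  have h8q : (2:ℕ)^(k+3) = 8 * 2^k := by rw [pow_add]; ring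
  have hWcard : (((Finset.Icc 1 (2^(k+3) - 1)).erase (8+s)).filter
      (fun x => x % 8 = s)).card = 2^k - 1 := by
    rw [Dcoset_card k s s hk hs1 hs7 hs1 hs7, if_pos rfl]
  rw [← hWcard, ← X_card k s hk hs1 hs7, ← Finset.card_product]
  apply Finset.card_bij (fun t _ =>
    ((t.filter (fun x => x % 8 = s)).sup id,
     (t.filter (fun x => x % 8 ≠ 0 ∧ x % 8 ≠ s ∧ x % 8 < (x % 8) ^^^ s)).sup id))
  · rintro t ht
    simp only [Finset.mem_filter, Finset.mem_powerset] at ht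
    obtain ⟨⟨hsub, htrip, hcond⟩, hnA, hnE⟩ := ht
    push_neg at hnE
    obtain ⟨w, x, hwx, hws, hx0, hxs, hxlt, rfl⟩ :=
      triple_shape_zero (by omega : s ≠ 0) htrip hcond hnE
    have hz8 : (w ^^^ x) % 8 = s ^^^ (x % 8) := by rw [xor_mod8, hws]
    have hzs : (w ^^^ x) % 8 ≠ s := by rw [hz8]; exact xor_ne_left hx0
    have hz0 : (w ^^^ x) % 8 ≠ 0 := by
      rw [hz8]; exact fun h => hxs (xor_eq_zero_iff.1 h).symm
    have hznotrep : ¬ ((w ^^^ x) % 8 ≠ 0 ∧ (w ^^^ x) % 8 ≠ s ∧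
        (w ^^^ x) % 8 < ((w ^^^ x) % 8) ^^^ s) := by
      rintro ⟨-, -, hlt⟩
      rw [hz8] at hlt
      have h1 : (s ^^^ x % 8) ^^^ s = x % 8 := by
        rw [Nat.xor_comm s (x % 8)]; exact xor_cancel_right (x % 8) s
      rw [h1] at hlt
      have h2 : (x % 8) ^^^ s = s ^^^ (x % 8) := Nat.xor_comm _ _
      omega
    have hxnotW : ¬ (x % 8 = s) := hxs
    have hwnotrep : ¬ (w % 8 ≠ 0 ∧ w % 8 ≠ s ∧ w % 8 < (w % 8) ^^^ s) := by
      rintro ⟨-, h, -⟩; exact h hws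
    rw [filter_triple_single (p := fun x => x % 8 = s) hws hxnotW hzs,
      filter_triple_mid (p := fun y => y % 8 ≠ 0 ∧ y % 8 ≠ s ∧ y % 8 < (y % 8) ^^^ s)
        hwnotrep ⟨hx0, hxs, hxlt⟩ hznotrep, Finset.sup_singleton, Finset.sup_singleton]
    simp only [Finset.mem_product, Finset.mem_filter, id]
    exact ⟨⟨hsub (by simp), hws⟩, ⟨hsub (by simp), hx0, hxs, hxlt⟩⟩
  · rintro t1 h1 t2 h2 heq
    simp only [Finset.mem_filter, Finset.mem_powerset] at h1 h2
    obtain ⟨⟨hsub1, htrip1, hcond1⟩, hnA1, hnE1⟩ := h1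
    obtain ⟨⟨hsub2, htrip2, hcond2⟩, hnA2, hnE2⟩ := h2
    push_neg at hnE1 hnE2
    obtain ⟨w1, x1, hwx1, hws1, hx01, hxs1, hxlt1, rfl⟩ :=
      triple_shape_zero (by omega : s ≠ 0) htrip1 hcond1 hnE1
    obtain ⟨w2, x2, hwx2, hws2, hx02, hxs2, hxlt2, rfl⟩ :=
      triple_shape_zero (by omega : s ≠ 0) htrip2 hcond2 hnE2
    have hz81 : (w1 ^^^ x1) % 8 = s ^^^ (x1 % 8) := by rw [xor_mod8, hws1]
    have hz82 : (w2 ^^^ x2) % 8 = s ^^^ (x2 % 8) := by rw [xor_mod8, hws2]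
    have hzs1 : (w1 ^^^ x1) % 8 ≠ s := by rw [hz81]; exact xor_ne_left hx01
    have hzs2 : (w2 ^^^ x2) % 8 ≠ s := by rw [hz82]; exact xor_ne_left hx02
    have hznotrep1 : ¬ ((w1 ^^^ x1) % 8 ≠ 0 ∧ (w1 ^^^ x1) % 8 ≠ s ∧
        (w1 ^^^ x1) % 8 < ((w1 ^^^ x1) % 8) ^^^ s) := by
      rintro ⟨-, -, hlt⟩
      rw [hz81] at hlt
      have ha : (s ^^^ x1 % 8) ^^^ s = x1 % 8 := by
        rw [Nat.xor_comm s (x1 % 8)]; exact xor_cancel_right (x1 % 8) s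
      rw [ha] at hlt
      have hb : (x1 % 8) ^^^ s = s ^^^ (x1 % 8) := Nat.xor_comm _ _
      omega
    have hznotrep2 : ¬ ((w2 ^^^ x2) % 8 ≠ 0 ∧ (w2 ^^^ x2) % 8 ≠ s ∧
        (w2 ^^^ x2) % 8 < ((w2 ^^^ x2) % 8) ^^^ s) := by
      rintro ⟨-, -, hlt⟩
      rw [hz82] at hlt
      have ha : (s ^^^ x2 % 8) ^^^ s = x2 % 8 := by
        rw [Nat.xor_comm s (x2 % 8)]; exact xor_cancel_right (x2 % 8) s
      rw [ha] at hlt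
      have hb : (x2 % 8) ^^^ s = s ^^^ (x2 % 8) := Nat.xor_comm _ _
      omega
    have hwnotrep1 : ¬ (w1 % 8 ≠ 0 ∧ w1 % 8 ≠ s ∧ w1 % 8 < (w1 % 8) ^^^ s) := by
      rintro ⟨-, h, -⟩; exact h hws1
    have hwnotrep2 : ¬ (w2 % 8 ≠ 0 ∧ w2 % 8 ≠ s ∧ w2 % 8 < (w2 % 8) ^^^ s) := by
      rintro ⟨-, h, -⟩; exact h hws2
    rw [filter_triple_single (p := fun x => x % 8 = s) hws1 hxs1 hzs1,
      filter_triple_single (p := fun x => x % 8 = s) hws2 hxs2 hzs2,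
      filter_triple_mid (p := fun y => y % 8 ≠ 0 ∧ y % 8 ≠ s ∧ y % 8 < (y % 8) ^^^ s)
        hwnotrep1 ⟨hx01, hxs1, hxlt1⟩ hznotrep1,
      filter_triple_mid (p := fun y => y % 8 ≠ 0 ∧ y % 8 ≠ s ∧ y % 8 < (y % 8) ^^^ s)
        hwnotrep2 ⟨hx02, hxs2, hxlt2⟩ hznotrep2,
      Finset.sup_singleton, Finset.sup_singleton, Finset.sup_singleton,
      Finset.sup_singleton] at heq
    simp only [Prod.mk.injEq, id] at heq
    rw [heq.1, heq.2]
  · rintro ⟨w, x⟩ hp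
    simp only [Finset.mem_product, Finset.mem_filter, Finset.mem_erase, Finset.mem_Icc] at hp
    obtain ⟨⟨⟨hwS, hw1, hw2⟩, hws⟩, ⟨hxS, hx1, hx2⟩, hx0, hxs, hxlt⟩ := hp
    have hwx : w ≠ x := by
      intro h
      rw [h] at hws
      exact hxs hws
    have hz8 : (w ^^^ x) % 8 = s ^^^ (x % 8) := by rw [xor_mod8, hws]
    have hzs : (w ^^^ x) % 8 ≠ s := by rw [hz8]; exact xor_ne_left hx0
    have hz0 : (w ^^^ x) % 8 ≠ 0 := by
      rw [hz8]; exact fun h => hxs (xor_eq_zero_iff.1 h).symm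
    have hzlt : w ^^^ x < 2^(k+3) := Nat.xor_lt_two_pow (by omega) (by omega)
    have hzpos : 0 < w ^^^ x := xor_pos hwx
    have hzS : w ^^^ x ≠ 8 + s := by
      intro h
      rw [h] at hzs
      omega
    have hznotrep : ¬ ((w ^^^ x) % 8 ≠ 0 ∧ (w ^^^ x) % 8 ≠ s ∧
        (w ^^^ x) % 8 < ((w ^^^ x) % 8) ^^^ s) := by
      rintro ⟨-, -, hlt⟩
      rw [hz8] at hlt
      have ha : (s ^^^ x % 8) ^^^ s = x % 8 := by
        rw [Nat.xor_comm s (x % 8)]; exact xor_cancel_right (x % 8) s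
      rw [ha] at hlt
      have hb : (x % 8) ^^^ s = s ^^^ (x % 8) := Nat.xor_comm _ _
      omega
    have hwnotrep : ¬ (w % 8 ≠ 0 ∧ w % 8 ≠ s ∧ w % 8 < (w % 8) ^^^ s) := by
      rintro ⟨-, h, -⟩; exact h hws
    refine ⟨{w, x, w ^^^ x}, ?_, ?_⟩
    · simp only [Finset.mem_filter, Finset.mem_powerset]
      refine ⟨⟨?_, isXorTriple_mk (by omega) (by omega) hwx, ?_⟩, ?_, ?_⟩
      · intro z hz
        simp only [Finset.mem_insert, Finset.mem_singleton] at hz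
        simp only [Finset.mem_erase, Finset.mem_Icc]
        rcases hz with rfl | rfl | rfl
        · exact ⟨hwS, by omega⟩
        · exact ⟨hxS, by omega⟩
        · exact ⟨hzS, by omega⟩
      · exact ⟨w, by simp, Or.inr hws⟩
      · push_neg
        exact ⟨w, by simp, by omega⟩
      · rintro ⟨z, hz, hz8'⟩
        simp only [Finset.mem_insert, Finset.mem_singleton] at hz
        rcases hz with rfl | rfl | rfl
        · omega
        · exact hx0 hz8'
        · exact hz0 hz8'
    · rw [filter_triple_single (p := fun x => x % 8 = s) hws hxs hzs,
        filter_triple_mid (p := fun y => y % 8 ≠ 0 ∧ y % 8 ≠ s ∧ y % 8 < (y % 8) ^^^ s)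
          hwnotrep ⟨hx0, hxs, hxlt⟩ hznotrep, Finset.sup_singleton, Finset.sup_singleton]
      rfl

end Master0
section Final

lemma master (k s : ℕ) (hk : 1 ≤ k) (hs1 : 1 ≤ s) (hs7 : s ≤ 7) :
    (((Finset.Icc 1 (2^(k+3) - 1)).erase (8+s)).powerset.filter
        (fun t => IsXorTriple t ∧ ∃ x ∈ t, x % 8 = 0 ∨ x % 8 = s)).card
      = ((Finset.Icc 1 (2^k - 1)).powerset.filter IsXorTriple).card
        + ((2^k - 1).choose 2 + 6 * (2^k).choose 2)
        + (2^k - 1) * (3 * 2^k) := by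
  have h1 := (Finset.card_filter_add_card_filter_not
    (s := ((Finset.Icc 1 (2^(k+3) - 1)).erase (8+s)).powerset.filter
        (fun t => IsXorTriple t ∧ ∃ x ∈ t, x % 8 = 0 ∨ x % 8 = s))
    (fun t => ∀ x ∈ t, x % 8 = 0)).symm
  have h2 := (Finset.card_filter_add_card_filter_not
    (s := (((Finset.Icc 1 (2^(k+3) - 1)).erase (8+s)).powerset.filter
        (fun t => IsXorTriple t ∧ ∃ x ∈ t, x % 8 = 0 ∨ x % 8 = s)).filter
        (fun t => ¬ ∀ x ∈ t, x % 8 = 0))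
    (fun t => ∃ x ∈ t, x % 8 = 0)).symm
  have m1 := master1 k s hk hs1 hs7
  have m0 := master0 k s hk hs1 hs7
  rw [← Finset.filter_filter] at m1 m0
  rw [h1, h2, master3 k s hk hs1 hs7, m1, m0]
  ring

theorem sand_mandala_filled_triples (N S : ℕ) (hN : 5 ≤ N) (h8 : 8 < S) (h16 : S < 16) :
    let s := S - 8
    6 ∣ (2 ^ (N - 3) - 1) * (2 ^ (N - 3) - 2) ∧
    (((Finset.Icc 1 (2 ^ (N - 1) - 1)).erase S).powerset.filter
        (fun t => IsXorTriple t ∧ ∃ x ∈ t, x % 8 = 0 ∨ x % 8 = s)).card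
      = 4 * (2 ^ (N - 4) * (2 ^ (N - 4) - 1) + (2 ^ (N - 3) - 1) * (2 ^ (N - 3) - 2) / 6) := by
  intro s
  have hs : s = S - 8 := rfl
  constructor
  · exact ⟨_, (xt_count (N-3)).symm⟩
  · have e1 : N - 1 = (N - 4) + 3 := by omega
    have e3 : N - 3 = (N - 4) + 1 := by omega
    have eS : S = 8 + s := by omega
    have hk : 1 ≤ N - 4 := by omega
    have hs1 : 1 ≤ s := by omega
    have hs7 : s ≤ 7 := by omega
    rw [e1, e3, eS, master (N - 4) s hk hs1 hs7]
    have hdiv : (2^((N-4)+1) - 1) * (2^((N-4)+1) - 2) / 6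
        = ((Finset.Icc 1 (2^((N-4)+1) - 1)).powerset.filter IsXorTriple).card := by
      rw [← xt_count ((N-4)+1), Nat.mul_div_cancel_left _ (by norm_num : (0:ℕ) < 6)]
    rw [hdiv]
    set A := ((Finset.Icc 1 (2^(N-4) - 1)).powerset.filter IsXorTriple).card with hAdef
    set B := ((Finset.Icc 1 (2^((N-4)+1) - 1)).powerset.filter IsXorTriple).card with hBdef
    obtain ⟨p, hp⟩ : ∃ p, 2^(N-4) = p + 2 := by
      have : 2 ≤ 2^(N-4) := by
        calc 2 = 2^1 := (pow_one 2).symm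
        _ ≤ 2^(N-4) := Nat.pow_le_pow_right (by norm_num) hk
      exact ⟨2^(N-4) - 2, by omega⟩
    have hp2 : (2:ℕ)^((N-4)+1) = 2*p + 4 := by rw [pow_succ]; omega
    have hA : 6 * A = (p + 1) * p := by
      rw [hAdef, xt_count (N-4), hp]
      rw [show p + 2 - 1 = p + 1 by omega, show p + 2 - 2 = p by omega]
    have hB : 6 * B = (2*p + 3) * (2*p + 2) := by
      rw [hBdef, xt_count ((N-4)+1), hp2]
      rw [show 2*p + 4 - 1 = 2*p + 3 by omega, show 2*p + 4 - 2 = 2*p + 2 by omega]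
    have hC1 : 2 * (p + 1).choose 2 = (p + 1) * p := by
      have := choose2 (p + 1)
      simpa using this
    have hC2 : 2 * (p + 2).choose 2 = (p + 2) * (p + 1) := by
      have := choose2 (p + 2)
      simpa using this
    rw [hp]
    rw [show p + 2 - 1 = p + 1 by omega]
    apply Nat.eq_of_mul_eq_mul_left (show 0 < 6 by norm_num)
    calc 6 * (A + ((p + 1).choose 2 + 6 * (p + 2).choose 2) + (p + 1) * (3 * (p + 2)))
        = 6 * A + 3 * (2 * (p + 1).choose 2) + 18 * (2 * (p + 2).choose 2)
          + 18 * ((p + 1) * (p + 2)) := by ring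
      _ = (p + 1) * p + 3 * ((p + 1) * p) + 18 * ((p + 2) * (p + 1))
          + 18 * ((p + 1) * (p + 2)) := by rw [hA, hC1, hC2]
      _ = 24 * ((p + 2) * (p + 1)) + 4 * ((2*p + 3) * (2*p + 2)) := by ring
      _ = 24 * ((p + 2) * (p + 1)) + 4 * (6 * B) := by rw [hB]
      _ = 6 * (4 * ((p + 2) * (p + 1) + B)) := by ring

end Final
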